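/- Let N ≥ 4 be an even natural number and define θ : Fin N → ℝ by θ_i = 2π·i/N. Then for all pairwise distinct indices i, j, l in Fin N, cos(2(θ_i − θ_j)) + cos(2(θ_j − θ_l)) + cos(2(θ_i − θ_l)) ≤ 1 + 2·cos(4π/N). -/

import Mathlib

open Real

lemma aux_cos_two_pi_sub (x : ℝ) : Real.cos (2 * Real.pi - x) = Real.cos x := by
  rw [Real.cos_sub, Real.cos_two_pi, Real.sin_two_pi]; ring

lemma aux_cos_bound (M : ℕ) (hM : 2 ≤ M) (k : ℤ) (hk : ¬ ((M:ℤ) ∣ k)) :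
    Real.cos (2 * Real.pi * k / M) ≤ Real.cos (2 * Real.pi / M) := by
  have hM0 : (0:ℝ) < M := by positivity
  have hMz : (M:ℤ) ≠ 0 := by exact_mod_cast (by omega : M ≠ 0)
  set r : ℤ := k % M with hr
  have hr0 : 0 ≤ r := Int.emod_nonneg k hMz
  have hrM : r < M := Int.emod_lt_of_pos k (by exact_mod_cast (by omega : 0 < M))
  have hrne : r ≠ 0 := fun h => hk (Int.dvd_of_emod_eq_zero h)
  have hkeq : (k:ℝ) = r + (M:ℝ) * ((k / M : ℤ) : ℝ) := by
    have h : r + (M:ℤ) * (k / M) = k := Int.emod_add_mul_ediv k (M:ℤ)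
    exact_mod_cast h.symm
  have key : Real.cos (2*Real.pi*k/M) = Real.cos (2*Real.pi*r/M) := by
    have harg : 2*Real.pi*(k:ℝ)/M = 2*Real.pi*r/M + ((k / M : ℤ) : ℝ) * (2*Real.pi) := by
      rw [hkeq]; field_simp
    rw [harg, Real.cos_add_int_mul_two_pi]
  rw [key]
  have hr1 : (1:ℤ) ≤ r := by omega
  have hπ := Real.pi_pos
  -- reduce to s with 1 ≤ s, 2s ≤ M
  rcases le_or_gt (2*r) (M:ℤ) with hcase | hcase
  · apply Real.cos_le_cos_of_nonneg_of_le_pi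
    · positivity
    · rw [div_le_iff₀ hM0]
      have : (2:ℝ)*r ≤ M := by exact_mod_cast hcase
      nlinarith
    · apply div_le_div_of_nonneg_right ?_ hM0.le
      have : (1:ℝ) ≤ r := by exact_mod_cast hr1
      nlinarith
  · set s : ℤ := (M:ℤ) - r with hs
    have hs1 : (1:ℤ) ≤ s := by omega
    have hs2 : 2*s ≤ (M:ℤ) := by omega
    have hrw : Real.cos (2*Real.pi*r/M) = Real.cos (2*Real.pi*s/M) := by
      have : 2*Real.pi*(r:ℝ)/M = 2*Real.pi - 2*Real.pi*s/M := by
        have hsr : (s:ℝ) = (M:ℝ) - r := by push_cast [hs]; ring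
        rw [hsr]; field_simp; ring
      rw [this, aux_cos_two_pi_sub]
    rw [hrw]
    apply Real.cos_le_cos_of_nonneg_of_le_pi
    · positivity
    · rw [div_le_iff₀ hM0]
      have : (2:ℝ)*s ≤ M := by exact_mod_cast hs2
      nlinarith
    · apply div_le_div_of_nonneg_right ?_ hM0.le
      have : (1:ℝ) ≤ s := by exact_mod_cast hs1
      nlinarith

lemma aux_not_both (M : ℕ) (hM : 2 ≤ M) (a b : ℤ) (ha : a ≠ 0) (hb : b ≠ 0)
    (hab : a + b ≠ 0) (ha2 : a.natAbs < 2*M) (hb2 : b.natAbs < 2*M)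
    (hab2 : (a+b).natAbs < 2*M) : ¬(((M:ℤ) ∣ a) ∧ ((M:ℤ) ∣ b)) := by
  rintro ⟨⟨s, hsa⟩, ⟨t, htb⟩⟩
  have hsA : a.natAbs = M * s.natAbs := by rw [hsa, Int.natAbs_mul, Int.natAbs_natCast]
  have htA : b.natAbs = M * t.natAbs := by rw [htb, Int.natAbs_mul, Int.natAbs_natCast]
  have hs0 : s.natAbs ≠ 0 := by rintro h; rw [h, Nat.mul_zero] at hsA; omega
  have ht0 : t.natAbs ≠ 0 := by rintro h; rw [h, Nat.mul_zero] at htA; omega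
  have hs1 : s.natAbs = 1 := by nlinarith [hsA, ha2, hs0, Nat.one_le_iff_ne_zero.mpr hs0]
  have ht1 : t.natAbs = 1 := by nlinarith [htA, hb2, ht0, Nat.one_le_iff_ne_zero.mpr ht0]
  have hs' : s = 1 ∨ s = -1 := Int.natAbs_eq_iff.mp hs1
  have ht' : t = 1 ∨ t = -1 := Int.natAbs_eq_iff.mp ht1
  rcases hs' with h1 | h1 <;> rcases ht' with h2 | h2 <;>
    subst h1 <;> subst h2 <;> simp only [mul_one, mul_neg] at hsa htb <;> omega

theorem stmt_8 (N : ℕ) (hN : 4 ≤ N) (hNeven : Even N) (θ : Fin N → ℝ)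
    (hθ : ∀ i : Fin N, θ i = 2 * Real.pi * (i : ℕ) / N) :
    ∀ i j l : Fin N, i ≠ j → i ≠ l → j ≠ l →
      Real.cos (2 * (θ i - θ j)) + Real.cos (2 * (θ j - θ l)) +
        Real.cos (2 * (θ i - θ l)) ≤ 1 + 2 * Real.cos (4 * Real.pi / N) := by
  intro i j l hij hil hjl
  obtain ⟨M, hNM⟩ := hNeven
  have hNM' : N = 2 * M := by omega
  have hM2 : 2 ≤ M := by omega
  have hMr0 : (0:ℝ) < M := by positivity
  have hNr : (N:ℝ) = 2 * M := by exact_mod_cast congrArg (Nat.cast : ℕ → ℝ) hNM'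
  set a : ℤ := (i:ℤ) - (j:ℤ) with hadef
  set b : ℤ := (j:ℤ) - (l:ℤ) with hbdef
  have hiv : ((i:Fin N):ℤ) < N := by exact_mod_cast i.isLt
  have hjv : ((j:Fin N):ℤ) < N := by exact_mod_cast j.isLt
  have hlv : ((l:Fin N):ℤ) < N := by exact_mod_cast l.isLt
  have ha0 : a ≠ 0 := by
    simp only [hadef, sub_ne_zero]
    exact_mod_cast fun h => hij (Fin.ext (by exact_mod_cast h))
  have hb0 : b ≠ 0 := by
    simp only [hbdef, sub_ne_zero]
    exact_mod_cast fun h => hjl (Fin.ext (by exact_mod_cast h))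
  have hab0 : a + b ≠ 0 := by
    have : a + b = (i:ℤ) - (l:ℤ) := by rw [hadef, hbdef]; ring
    rw [this, sub_ne_zero]
    exact_mod_cast fun h => hil (Fin.ext (by exact_mod_cast h))
  have haN : a.natAbs < 2*M := by omega
  have hbN : b.natAbs < 2*M := by omega
  have habN : (a+b).natAbs < 2*M := by omega
  -- rewrite arguments
  have e1 : 2*(θ i - θ j) = 2*Real.pi*(a:ℝ)/M := by
    rw [hθ i, hθ j]; push_cast [hadef]; rw [hNr]; field_simp
  have e2 : 2*(θ j - θ l) = 2*Real.pi*(b:ℝ)/M := by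
    rw [hθ j, hθ l]; push_cast [hbdef]; rw [hNr]; field_simp
  have e3 : 2*(θ i - θ l) = 2*Real.pi*((a+b:ℤ):ℝ)/M := by
    rw [hθ i, hθ l]; push_cast [hadef, hbdef]; rw [hNr]; field_simp; ring
  have e4 : 4*Real.pi/(N:ℝ) = 2*Real.pi/M := by rw [hNr]; field_simp; ring
  rw [e1, e2, e3, e4]
  have hcos1 : Real.cos (2*Real.pi/(M:ℝ)) ≤ 1 := Real.cos_le_one _
  have hnb := aux_not_both M hM2 a b ha0 hb0 hab0 haN hbN habN
  by_cases hda : (M:ℤ) ∣ a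
  · have hdb : ¬ (M:ℤ) ∣ b := fun h => hnb ⟨hda, h⟩
    have hdc : ¬ (M:ℤ) ∣ (a+b) := fun h => hdb (by simpa using dvd_sub h hda)
    have b1 := Real.cos_le_one (2*Real.pi*(a:ℝ)/M)
    have b2 := aux_cos_bound M hM2 b hdb
    have b3 := aux_cos_bound M hM2 (a+b) hdc
    linarith
  · by_cases hdb : (M:ℤ) ∣ b
    · have hdc : ¬ (M:ℤ) ∣ (a+b) := fun h => hda (by simpa using dvd_sub h hdb)
      have b1 := aux_cos_bound M hM2 a hda
      have b2 := Real.cos_le_one (2*Real.pi*(b:ℝ)/M)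
      have b3 := aux_cos_bound M hM2 (a+b) hdc
      linarith
    · have b1 := aux_cos_bound M hM2 a hda
      have b2 := aux_cos_bound M hM2 b hdb
      by_cases hdc : (M:ℤ) ∣ (a+b)
      · have b3 := Real.cos_le_one (2*Real.pi*((a+b:ℤ):ℝ)/M)
        linarith
      · have b3 := aux_cos_bound M hM2 (a+b) hdc
        linarith
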